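/- On the complete graph K_n with n ≥ 2 vertices, every effective divisor D of degree at most n-2 satisfies r(D) ≤ 0; consequently the gonality of K_n is at least n-1. -/

import Mathlib

open Finset

structure Multigraph (V : Type) [Fintype V] [DecidableEq V] : Type where
  mult : V → V → ℕ
  symm : ∀ u v : V, mult u v = mult v u
  loopless : ∀ v : V, mult v v = 0
  connected : ∀ u v : V, Relation.ReflTransGen (fun a b => 0 < mult a b) u v

def divDeg {V : Type} [Fintype V] (D : V → ℤ) : ℤ := ∑ v, D v

def Effective {V : Type} (D : V → ℤ) : Prop := ∀ v, 0 ≤ D v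

namespace Multigraph

variable {V : Type} [Fintype V] [DecidableEq V]

def degree (G : Multigraph V) (v : V) : ℕ := ∑ w, G.mult v w

def edgeCount (G : Multigraph V) : ℕ := (∑ v, G.degree v) / 2

def genus (G : Multigraph V) : ℤ := (G.edgeCount : ℤ) - (Fintype.card V : ℤ) + 1

def laplacian (G : Multigraph V) (f : V → ℤ) : V → ℤ :=
  fun v => ∑ w, (G.mult v w : ℤ) * (f v - f w)

def Principal (G : Multigraph V) (D : V → ℤ) : Prop := ∃ f : V → ℤ, D = G.laplacian f

def Winnable (G : Multigraph V) (D : V → ℤ) : Prop :=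
  ∃ E : V → ℤ, Effective E ∧ G.Principal (D - E)

noncomputable def rank (G : Multigraph V) (D : V → ℤ) : ℤ :=
  sSup (insert (-1) {k : ℤ | 0 ≤ k ∧ ∀ E : V → ℤ, Effective E → divDeg E = k →
    G.Winnable (D - E)})

end Multigraph

/-- The complete graph on n vertices. -/
def completeMG (n : ℕ) : Multigraph (Fin n) where
  mult := fun u v => if u = v then 0 else 1
  symm := by
    intro u v
    rcases eq_or_ne u v with rfl | h
    · rfl
    · simp only [if_neg h, if_neg (Ne.symm h)]
  loopless := by intro v; simp
  connected := by
    intro u v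
    rcases eq_or_ne u v with rfl | h
    · exact Relation.ReflTransGen.refl
    · exact Relation.ReflTransGen.single (by simp [h])

/-! ### Auxiliary lemmas -/

lemma lap_complete (n : ℕ) (f : Fin n → ℤ) (v : Fin n) :
    (completeMG n).laplacian f v = n * f v - ∑ w, f w := by
  have h : ∀ w : Fin n, (((completeMG n).mult v w : ℕ) : ℤ) * (f v - f w) = f v - f w := by
    intro w
    rcases eq_or_ne v w with rfl | h
    · simp [completeMG]
    · simp [completeMG, h]
  unfold Multigraph.laplacian
  rw [Finset.sum_congr rfl (fun w _ => h w), Finset.sum_sub_distrib, Finset.sum_const,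
    Finset.card_univ, Fintype.card_fin, nsmul_eq_mul]

lemma divDeg_sub {V : Type} [Fintype V] (D E : V → ℤ) :
    divDeg (D - E) = divDeg D - divDeg E := by
  simp [divDeg, Finset.sum_sub_distrib]

lemma divDeg_lap (n : ℕ) (f : Fin n → ℤ) :
    divDeg ((completeMG n).laplacian f) = 0 := by
  have : ∀ v : Fin n, (completeMG n).laplacian f v = n * f v - ∑ w, f w :=
    lap_complete n f
  simp only [divDeg, this, Finset.sum_sub_distrib, Finset.sum_const, Finset.card_univ,
    Fintype.card_fin, ← Finset.mul_sum]
  simp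

lemma lap_sub {V : Type} [Fintype V] [DecidableEq V] (G : Multigraph V) (f g : V → ℤ) :
    G.laplacian (f - g) = G.laplacian f - G.laplacian g := by
  funext v
  simp only [Multigraph.laplacian, Pi.sub_apply, ← Finset.sum_sub_distrib]
  congr 1
  funext w
  ring

/-- Weakening: if `D - E` is winnable and `E - E'` is effective, so is `D - E'`. -/
lemma winnable_mono {V : Type} [Fintype V] [DecidableEq V] (G : Multigraph V)
    (D E E' : V → ℤ) (hw : G.Winnable (D - E)) (h : Effective (E - E')) :
    G.Winnable (D - E') := by
  obtain ⟨F, hF, f, hf⟩ := hw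
  refine ⟨(E - E') + F, fun v => add_nonneg (h v) (hF v), f, ?_⟩
  rw [← hf]
  funext v
  simp only [Pi.sub_apply, Pi.add_apply]
  ring

/-- Winnability is invariant under subtracting a principal divisor. -/
lemma winnable_shift {V : Type} [Fintype V] [DecidableEq V] (G : Multigraph V)
    (D : V → ℤ) (f : V → ℤ) (hw : G.Winnable D) : G.Winnable (D - G.laplacian f) := by
  obtain ⟨E, hE, g, hg⟩ := hw
  refine ⟨E, hE, g - f, ?_⟩
  rw [lap_sub, ← hg]
  funext v
  simp only [Pi.sub_apply]
  ring

lemma exists_zero {n : ℕ} (hn : 2 ≤ n) (D : Fin n → ℤ) (hD : Effective D)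
    (hdeg : divDeg D ≤ (n : ℤ) - 2) : ∃ q, D q = 0 := by
  by_contra h
  push_neg at h
  have h1 : ∀ v, 1 ≤ D v := fun v => by have := hD v; have := h v; omega
  have : (n : ℤ) ≤ divDeg D := by
    calc (n : ℤ) = ∑ _v : Fin n, (1 : ℤ) := by simp
    _ ≤ ∑ v, D v := Finset.sum_le_sum fun v _ => h1 v
  linarith

/-- Core lemma: on `K_n`, if `D` is effective of degree ≤ n-2 and `D q = 0`,
then `D - δ_q` is not winnable. -/
lemma not_winnable_core (n : ℕ) (hn : 2 ≤ n) (D : Fin n → ℤ)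
    (hD : Effective D) (hdeg : divDeg D ≤ (n : ℤ) - 2) (q : Fin n) (hq : D q = 0) :
    ¬ (completeMG n).Winnable (D - fun v => if v = q then 1 else 0) := by
  rintro ⟨E, hE, f, hf⟩
  have key : ∀ v, (n : ℤ) * f v - ∑ w, f w + (if v = q then 1 else 0) ≤ D v := by
    intro v
    have h0 := congrFun hf v
    simp only [Pi.sub_apply] at h0
    rw [lap_complete n f v] at h0
    have hEv := hE v
    rcases eq_or_ne v q with rfl | hv
    · simp only [if_pos rfl] at h0 ⊢; linarith
    · simp only [if_neg hv] at h0 ⊢; linarith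
  -- let M be the max of f
  haveI : Nonempty (Fin n) := ⟨q⟩
  obtain ⟨v0, hv0⟩ := Finite.exists_max f
  set M := f v0 with hM
  rcases eq_or_ne (f q) M with hqM | hqM
  · -- q attains the max: contradiction at q
    have h1 : (0:ℤ) ≤ (n : ℤ) * f q - ∑ w, f w := by
      have : (n : ℤ) * f q - ∑ w, f w = ∑ w, (M - f w) := by
        rw [Finset.sum_sub_distrib, Finset.sum_const, Finset.card_univ, Fintype.card_fin,
          nsmul_eq_mul, hqM]
      rw [this]
      exact Finset.sum_nonneg fun w _ => by linarith [hv0 w]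
    have h2 := key q
    rw [if_pos rfl] at h2
    linarith
  · -- q does not attain the max
    set A : Finset (Fin n) := Finset.univ.filter (fun v => f v = M) with hA
    have hv0A : v0 ∈ A := by simp [hA, hM]
    have hqA : q ∉ A := by simp [hA, hqM]
    have ha1 : 1 ≤ (A.card : ℤ) := by
      have : 0 < A.card := Finset.card_pos.2 ⟨v0, hv0A⟩
      exact_mod_cast this
    have ha2 : (A.card : ℤ) ≤ (n : ℤ) - 1 := by
      have hsub : A ⊆ Finset.univ.erase q := by
        intro v hv
        exact Finset.mem_erase.2 ⟨by rintro rfl; exact hqA hv, Finset.mem_univ v⟩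
      have := Finset.card_le_card hsub
      rw [Finset.card_erase_of_mem (Finset.mem_univ q), Finset.card_univ,
        Fintype.card_fin] at this
      omega
    -- count of non-maximal vertices
    have hcount : ∀ v ∈ A, ((n : ℤ) - A.card) ≤ (n : ℤ) * f v - ∑ w, f w := by
      intro v hv
      have hfv : f v = M := by simpa [hA] using hv
      have heq : (n : ℤ) * f v - ∑ w, f w = ∑ w, (M - f w) := by
        rw [Finset.sum_sub_distrib, Finset.sum_const, Finset.card_univ, Fintype.card_fin,
          nsmul_eq_mul, hfv]
      rw [heq]
      have : ∑ w, (if f w = M then (0:ℤ) else 1) ≤ ∑ w, (M - f w) := by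
        refine Finset.sum_le_sum fun w _ => ?_
        rcases eq_or_ne (f w) M with h | h
        · simp [h]
        · simp only [if_neg h]
          have := hv0 w
          have : f w < M := lt_of_le_of_ne this h
          linarith
      refine le_trans ?_ this
      rw [Finset.sum_ite, Finset.sum_const, Finset.sum_const, smul_zero, zero_add,
        nsmul_eq_mul, mul_one]
      have : (Finset.univ.filter (fun w => ¬ f w = M)).card = n - A.card := by
        have h3 := Finset.card_filter_add_card_filter_not
          (s := (Finset.univ : Finset (Fin n))) (p := fun w => f w = M)
        rw [Finset.card_univ, Fintype.card_fin] at h3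
        have hAe : Finset.univ.filter (fun w => f w = M) = A := rfl
        rw [hAe] at h3
        omega
      rw [this]
      have hle : A.card ≤ n := by
        have := Finset.card_le_card (Finset.subset_univ A)
        simpa using this
      push_cast [Nat.cast_sub hle]
      linarith
    -- sum the bound over A
    have hsumA : (A.card : ℤ) * ((n : ℤ) - A.card) ≤ ∑ v ∈ A, D v := by
      calc (A.card : ℤ) * ((n : ℤ) - A.card) = ∑ _v ∈ A, ((n : ℤ) - A.card) := by
            rw [Finset.sum_const, nsmul_eq_mul]
      _ ≤ ∑ v ∈ A, D v := Finset.sum_le_sum fun v hv => by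
            have h1 := hcount v hv
            have h2 := key v
            have hvq : v ≠ q := by rintro rfl; exact hqA hv
            simp only [if_neg hvq] at h2
            linarith
    have hsumD : ∑ v ∈ A, D v ≤ divDeg D :=
      Finset.sum_le_sum_of_subset_of_nonneg (Finset.subset_univ A)
        (fun v _ _ => hD v)
    nlinarith [mul_nonneg (by linarith : (0:ℤ) ≤ (A.card : ℤ) - 1)
      (by linarith : (0:ℤ) ≤ (n : ℤ) - 1 - A.card)]

theorem complete_graph_gonality_lower_bound (n : ℕ) (hn : 2 ≤ n) :
    (∀ D : Fin n → ℤ, Effective D → divDeg D ≤ (n : ℤ) - 2 →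
      (completeMG n).rank D ≤ 0) ∧
    (∀ d : ℤ, (∃ D : Fin n → ℤ, divDeg D = d ∧ 1 ≤ (completeMG n).rank D) →
      (n : ℤ) - 1 ≤ d) := by
  have hδdeg : ∀ (q : Fin n) (x : ℤ), divDeg (fun v => if v = q then x else 0) = x := by
    intro q x
    simp [divDeg, Finset.sum_ite_eq']
  have hδeff : ∀ (q : Fin n) (x : ℤ), 0 ≤ x → Effective (fun v => if v = q then x else 0) := by
    intro q x hx v
    dsimp only
    split <;> simp [hx]
  -- from k-winnability (k ≥ 1) deduce winnability of D - δ_q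
  have hstep : ∀ (D : Fin n → ℤ) (k : ℤ), 1 ≤ k →
      (∀ E : Fin n → ℤ, Effective E → divDeg E = k → (completeMG n).Winnable (D - E)) →
      ∀ q : Fin n, (completeMG n).Winnable (D - fun v => if v = q then 1 else 0) := by
    intro D k hk hall q
    have hw := hall (fun v => if v = q then k else 0) (hδeff q k (by linarith)) (hδdeg q k)
    refine winnable_mono _ D _ _ hw ?_
    intro v
    simp only [Pi.sub_apply]
    rcases eq_or_ne v q with rfl | hv
    · simp; linarith
    · simp [hv]
  constructor
  · intro D hD hdeg
    unfold Multigraph.rank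
    apply csSup_le ⟨-1, Set.mem_insert _ _⟩
    intro x hx
    rcases hx with rfl | hx
    · norm_num
    · obtain ⟨hx0, hxall⟩ := hx
      by_contra hx1
      push_neg at hx1
      have hx1 : 1 ≤ x := hx1
      obtain ⟨q, hq⟩ := exists_zero hn D hD hdeg
      exact not_winnable_core n hn D hD hdeg q hq (hstep D x hx1 hxall q)
  · rintro d ⟨D, hdD, hrank⟩
    unfold Multigraph.rank at hrank
    -- there is some k ≥ 1 in the set
    have hex : ∃ k : ℤ, (0 ≤ k ∧ ∀ E : Fin n → ℤ, Effective E → divDeg E = k →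
        (completeMG n).Winnable (D - E)) ∧ 1 ≤ k := by
      by_contra h
      push_neg at h
      have hle : sSup (insert (-1) {k : ℤ | 0 ≤ k ∧ ∀ E : Fin n → ℤ, Effective E →
          divDeg E = k → (completeMG n).Winnable (D - E)}) ≤ 0 := by
        apply csSup_le ⟨-1, Set.mem_insert _ _⟩
        intro x hx
        rcases hx with rfl | hx
        · norm_num
        · have := h x hx
          linarith
      linarith
    obtain ⟨k, ⟨hk0, hkall⟩, hk1⟩ := hex
    have hwq := hstep D k hk1 hkall
    by_contra hd
    push_neg at hd
    have hd2 : d ≤ (n : ℤ) - 2 := by linarith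
    have q0 : Fin n := ⟨0, by omega⟩
    obtain ⟨E0, hE0, f0, hf0⟩ := hwq q0
    set D' : Fin n → ℤ := D - (completeMG n).laplacian f0 with hD'
    have hD'eff : Effective D' := by
      intro v
      have h0 := congrFun hf0 v
      simp only [Pi.sub_apply] at h0
      have h1 := hE0 v
      have h2 : (0:ℤ) ≤ if v = q0 then 1 else 0 := by split <;> norm_num
      simp only [hD', Pi.sub_apply]
      linarith
    have hD'deg : divDeg D' = d := by
      rw [hD', divDeg_sub, divDeg_lap, hdD, sub_zero]
    obtain ⟨q1, hq1⟩ := exists_zero hn D' hD'eff (by rw [hD'deg]; exact hd2)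
    have hw1 : (completeMG n).Winnable (D' - fun v => if v = q1 then 1 else 0) := by
      have h2 := winnable_shift (completeMG n) _ f0 (hwq q1)
      have heq : (D' - fun v => if v = q1 then 1 else 0) =
          ((D - fun v => if v = q1 then 1 else 0) - (completeMG n).laplacian f0) := by
        funext v
        simp only [hD', Pi.sub_apply]
        ring
      rw [heq]
      exact h2
    exact not_winnable_core n hn D' hD'eff (by rw [hD'deg]; exact hd2) q1 hq1 hw1
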